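/- Let ε > 0 and let (z_n)_{n≥1} be a sequence of complex numbers with z₁ ≠ 0 such that ∑_{n≥1} |z_n| converges. Set 𝓜 = (1/|z₁|) ∑_{n=1}^∞ |z_n|. Then there exists an integer j with 1 ≤ j ≤ (8 + ε)𝓜 such that Re(∑_{n=1}^∞ z_n^j) ≥ (ε/(32 + 4ε)) · |z₁|^j. -/

import Mathlib

open Finset Complex

lemma psum_range_succ_eq_Icc {M : Type*} [AddCommMonoid M] (f : ℕ → M) (n : ℕ) :
    ∑ j ∈ Finset.range (n+1), f j = f 0 + ∑ j ∈ Finset.Icc 1 n, f j := by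
  induction n with
  | zero => simp
  | succ n ih =>
      rw [Finset.sum_range_succ, ih,
        Finset.sum_Icc_succ_top (Nat.succ_le_succ (Nat.zero_le n)), add_assoc]

lemma psum_Icc_one_geom (n : ℕ) (v : ℂ) :
    ∑ j ∈ Finset.Icc 1 n, v ^ j = v * ∑ i ∈ Finset.range n, v ^ i := by
  induction n with
  | zero => simp
  | succ n ih =>
      rw [Finset.sum_Icc_succ_top (Nat.succ_le_succ (Nat.zero_le n)), ih,
        Finset.sum_range_succ, mul_add, pow_succ]
      ring

/-- The Fejér–Poisson sum-of-squares identity. -/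
lemma fejer_ident (J : ℕ) (v : ℂ) :
    ((J:ℝ)+1) + 2 * ∑ j ∈ Finset.Icc 1 J, (((J:ℝ)+1-(j:ℝ)) * ((v^j).re)) =
    (1 - Complex.normSq v) *
        ∑ j ∈ Finset.range (J+1), Complex.normSq (∑ i ∈ Finset.range (j+1), v^i)
      + Complex.normSq (v * ∑ i ∈ Finset.range (J+1), v^i) := by
  induction J with
  | zero => simp [Complex.normSq_mul]
  | succ J ih =>
      set S := ∑ i ∈ Finset.range (J+1), v ^ i with hS
      have hsplit : ∑ j ∈ Finset.Icc 1 (J+1), (((J:ℝ)+1+1-(j:ℝ)) * ((v^j).re))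
          = (∑ j ∈ Finset.Icc 1 J, (((J:ℝ)+1-(j:ℝ)) * ((v^j).re))) + (v * S).re := by
        have h1 : ∀ j ∈ Finset.Icc 1 (J+1), ((J:ℝ)+1+1-(j:ℝ)) * ((v^j).re)
            = ((J:ℝ)+1-(j:ℝ)) * ((v^j).re) + (v^j).re := by intro j _; ring
        rw [Finset.sum_congr rfl h1, Finset.sum_add_distrib,
          Finset.sum_Icc_succ_top (Nat.succ_le_succ (Nat.zero_le J))]
        have h2 : ((J:ℝ)+1-((J+1:ℕ):ℝ)) = 0 := by push_cast; ring
        rw [h2, zero_mul, add_zero]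
        congr 1
        rw [← Complex.re_sum, psum_Icc_one_geom, ← hS]
      have hσ : ∑ i ∈ Finset.range (J+1+1), v ^ i = v * S + 1 := geom_sum_succ
      have hNS : Complex.normSq (v * S + 1)
          = Complex.normSq v * Complex.normSq S + 2 * (v*S).re + 1 := by
        rw [Complex.normSq_add, Complex.normSq_mul]
        simp [Complex.normSq_one, Complex.mul_re]
        ring
      rw [Complex.normSq_mul] at ih
      push_cast
      rw [Finset.sum_range_succ _ (J+1), hsplit, hσ, hNS, Complex.normSq_mul, hNS]
      linarith [ih]


/-- Fejér floor: the damped cosine sum is at least `-(J+1)/2`. -/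
lemma D_ge_neg_half (J : ℕ) (v : ℂ) (hv : ‖v‖ ≤ 1) :
    -(((J:ℝ)+1)/2) ≤ ∑ j ∈ Finset.Icc 1 J, (((J:ℝ)+1-(j:ℝ)) * ((v^j).re)) := by
  have h := fejer_ident J v
  have hnv : Complex.normSq v ≤ 1 := by
    rw [← Complex.sq_norm]
    nlinarith [norm_nonneg v]
  have h1 : 0 ≤ (1 - Complex.normSq v) *
      ∑ j ∈ Finset.range (J+1), Complex.normSq (∑ i ∈ Finset.range (j+1), v^i) :=
    mul_nonneg (by linarith) (Finset.sum_nonneg fun j _ => Complex.normSq_nonneg _)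
  have h2 : 0 ≤ Complex.normSq (v * ∑ i ∈ Finset.range (J+1), v^i) := Complex.normSq_nonneg _
  linarith

/-- Sharp-enough lower bound: `D J v ≥ -(J+2)·|v|`. -/
lemma D_ge (J : ℕ) (v : ℂ) (hv : ‖v‖ ≤ 1) :
    -(((J:ℝ)+2) * ‖v‖) ≤ ∑ j ∈ Finset.Icc 1 J, (((J:ℝ)+1-(j:ℝ)) * ((v^j).re)) := by
  set r := ‖v‖ with hr
  have hr0 : 0 ≤ r := norm_nonneg v
  rcases eq_or_lt_of_le hv with heq | hlt
  · -- r = 1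
    have h2 := D_ge_neg_half J v hv
    rw [heq]
    linarith
  · -- r < 1
    have h := fejer_ident J v
    have hnv : Complex.normSq v = r^2 := (Complex.sq_norm v).symm
    -- per-term bound
    have key : ∀ j ∈ Finset.range (J+1),
        (1-r) * (1 - 2*r^(j+1)) ≤
          (1+r) * ((1 - Complex.normSq v) * Complex.normSq (∑ i ∈ Finset.range (j+1), v^i)) := by
      intro j _
      set σ := ∑ i ∈ Finset.range (j+1), v^i with hσ
      have hgm : (1 - v) * σ = 1 - v^(j+1) := by
        have := geom_sum_mul v (j+1)
        rw [hσ]; linear_combination -this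
      have habs1 : 1 - r^(j+1) ≤ (1+r) * ‖σ‖ := by
        have e1 : ‖(1-v) * σ‖ = ‖1 - v^(j+1)‖ := by rw [hgm]
        have e2 : ‖1-v‖ ≤ 1 + r := by
          calc ‖1-v‖ ≤ ‖(1:ℂ)‖ + ‖v‖ := by
                simpa [sub_eq_add_neg] using norm_add_le 1 (-v)
            _ = 1 + r := by simp [hr]
        have e3 : 1 - r^(j+1) ≤ ‖1 - v^(j+1)‖ := by
          have := norm_add_le (1 - v^(j+1)) (v^(j+1))
          simpa [norm_pow, hr] using this
        calc 1 - r^(j+1) ≤ ‖1 - v^(j+1)‖ := e3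
          _ = ‖1-v‖ * ‖σ‖ := by rw [← e1, norm_mul]
          _ ≤ (1+r) * ‖σ‖ := by
              have := norm_nonneg σ
              nlinarith
      have hNS : Complex.normSq σ = (‖σ‖)^2 := (Complex.sq_norm σ).symm
      have hrp : (0:ℝ) ≤ r^(j+1) := pow_nonneg hr0 _
      have hrp1 : r^(j+1) ≤ 1 := pow_le_one₀ hr0 hv
      have haσ : 0 ≤ ‖σ‖ := norm_nonneg σ
      rw [hnv, hNS]
      have hsq : (1 - r^(j+1))^2 ≤ ((1+r) * ‖σ‖)^2 := by
        have h0 : 0 ≤ 1 - r^(j+1) := by linarith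
        nlinarith [habs1]
      nlinarith [hsq, sq_nonneg (r^(j+1))]
    have hsum := Finset.sum_le_sum key
    -- compute LHS of hsum
    have hgeo : (1-r) * ∑ j ∈ Finset.range (J+1), r^j = 1 - r^(J+1) := by
      have := geom_sum_mul r (J+1)
      linear_combination -this
    have hL : ∑ j ∈ Finset.range (J+1), (1-r) * (1 - 2*r^(j+1))
        = (1-r) * ((J:ℝ)+1) - 2*r*(1 - r^(J+1)) := by
      have : ∀ j ∈ Finset.range (J+1), (1-r) * (1 - 2*r^(j+1))
          = (1-r) - 2*r*((1-r) * r^j) := by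
        intro j _; ring
      rw [Finset.sum_congr rfl this, Finset.sum_sub_distrib, Finset.sum_const,
        Finset.card_range, ← Finset.mul_sum, ← Finset.mul_sum, hgeo]
      push_cast; ring
    have hR : ∑ j ∈ Finset.range (J+1),
        (1+r) * ((1 - Complex.normSq v) * Complex.normSq (∑ i ∈ Finset.range (j+1), v^i))
        = (1+r) * ((1 - Complex.normSq v) *
            ∑ j ∈ Finset.range (J+1), Complex.normSq (∑ i ∈ Finset.range (j+1), v^i)) := by
      rw [Finset.mul_sum, Finset.mul_sum]
    rw [hL, hR] at hsum
    -- combine with identity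
    have hpos : 0 ≤ Complex.normSq (v * ∑ i ∈ Finset.range (J+1), v^i) := Complex.normSq_nonneg _
    have hrJ : 0 ≤ r^(J+1) := pow_nonneg hr0 _
    -- (1+r) * ((J+1) + 2 D) ≥ (1-r)(J+1) - 2r
    set D := ∑ j ∈ Finset.Icc 1 J, (((J:ℝ)+1-(j:ℝ)) * ((v^j).re)) with hD
    have hHH : (1-r) * ((J:ℝ)+1) - 2*r ≤ (1+r) * (((J:ℝ)+1) + 2*D) := by nlinarith
    nlinarith [hHH]

/-- value at `v = 1`. -/
lemma D_one (J : ℕ) :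
    ∑ j ∈ Finset.Icc 1 J, (((J:ℝ)+1-(j:ℝ)) * (((1:ℂ)^j).re)) = (J:ℝ)*((J:ℝ)+1)/2 := by
  induction J with
  | zero => simp
  | succ J ih =>
      rw [Finset.sum_Icc_succ_top (Nat.succ_le_succ (Nat.zero_le J))]
      have : ∀ j ∈ Finset.Icc 1 J, (((J:ℝ)+1+1-(j:ℝ)) * (((1:ℂ)^j).re))
          = (((J:ℝ)+1-(j:ℝ)) * (((1:ℂ)^j).re)) + 1 := by
        intro j hj
        simp only [one_pow, Complex.one_re, mul_one]
        have := Finset.mem_Icc.mp hj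
        ring
      push_cast
      rw [Finset.sum_congr rfl this, Finset.sum_add_distrib, ih, Finset.sum_const,
        Nat.card_Icc]
      simp
      ring


lemma re_mul_re (x y : ℂ) : (x.re) * (y.re) = ((x*y).re + ((starRingEnd ℂ) x * y).re)/2 := by
  simp [Complex.mul_re, Complex.conj_re, Complex.conj_im]

lemma main_normalized (w : ℕ → ℂ) (hw : ∀ n, ‖w n‖ ≤ 1) (m : ℕ)
    (hm : ‖w m‖ = 1) (hsum : Summable fun n => ‖w n‖)
    (J : ℕ) (δ : ℝ) (hδ0 : 0 ≤ δ) (hδ1 : 2*δ ≤ 1)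
    (harith : 3*((J:ℝ)+1) + 8*((J:ℝ)+2)*((∑' n, ‖w n‖) - 1)
        < (J:ℝ)*((J:ℝ)+1)*(1 - 2*δ)) :
    ∃ j : ℕ, 1 ≤ j ∧ j ≤ J ∧ δ ≤ (∑' n, (w n)^j).re := by
  by_contra hcon
  push_neg at hcon
  set M := ∑' n, ‖w n‖ with hM
  set u := w m with hu
  set P : ℝ := (J:ℝ)+1 with hP
  -- basic facts
  have habs_u : ‖u‖ = 1 := hm
  have habs_upow : ∀ j : ℕ, ‖u^j‖ = 1 := by
    intro j; rw [norm_pow, habs_u, one_pow]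
  have hre_upow : ∀ j : ℕ, |(u^j).re| ≤ 1 := by
    intro j
    calc |(u^j).re| ≤ ‖u^j‖ := Complex.abs_re_le_norm _
      _ = 1 := habs_upow j
  -- weights
  set lam : ℕ → ℝ := fun j => (P-(j:ℝ)) * (1 + (u^j).re) / 2 with hlam
  have hlam_nonneg : ∀ j ∈ Finset.Icc 1 J, 0 ≤ lam j := by
    intro j hj
    have hj' := Finset.mem_Icc.mp hj
    have h1 : 0 ≤ P - (j:ℝ) := by
      rw [hP]; have : (j:ℝ) ≤ (J:ℝ) := by exact_mod_cast hj'.2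
      linarith
    have h2 : 0 ≤ 1 + (u^j).re := by have := hre_upow j; cases abs_le.mp this; linarith
    positivity
  -- D notation
  set D : ℂ → ℝ := fun v => ∑ j ∈ Finset.Icc 1 J, ((P-(j:ℝ)) * ((v^j).re)) with hD
  -- symmetrization identity
  have hsymm : ∀ v : ℂ, ∑ j ∈ Finset.Icc 1 J, lam j * ((v^j).re)
      = D v / 2 + D (u*v) / 4 + D ((starRingEnd ℂ) u * v) / 4 := by
    intro v
    rw [hD]
    simp only
    rw [Finset.sum_div, Finset.sum_div, Finset.sum_div, ← Finset.sum_add_distrib,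
      ← Finset.sum_add_distrib]
    apply Finset.sum_congr rfl
    intro j _
    have h1 : ((u*v)^j).re = (u^j * v^j).re := by rw [mul_pow]
    have h2 : (((starRingEnd ℂ) u * v)^j).re = ((starRingEnd ℂ) (u^j) * v^j).re := by
      rw [mul_pow, map_pow]
    rw [h1, h2, hlam]
    simp only
    have h3 := re_mul_re (u^j) (v^j)
    linear_combination ((P-(j:ℝ))/2) * h3
  -- rewrite axioms in terms of P
  have hDge : ∀ v : ℂ, ‖v‖ ≤ 1 → -(((J:ℝ)+2) * ‖v‖) ≤ D v := by
    intro v hv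
    have := D_ge J v hv
    rw [hD]; simp only [hP]
    exact this
  have hDhalf : ∀ v : ℂ, ‖v‖ ≤ 1 → -(P/2) ≤ D v := by
    intro v hv
    have := D_ge_neg_half J v hv
    rw [hD]; simp only [hP]
    exact this
  have hDone : D 1 = (J:ℝ)*P/2 := by
    have := D_one J
    rw [hD]; simp only [hP]
    rw [this]
  have hPsum : ∑ j ∈ Finset.Icc 1 J, (P-(j:ℝ)) = (J:ℝ)*P/2 := by
    have := D_one J
    simp only [one_pow, Complex.one_re, mul_one] at this
    simp only [hP]
    rw [this]
  -- summability
  have hpow_summ : ∀ j : ℕ, 1 ≤ j → Summable (fun n => (w n)^j) := by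
    intro j hj
    apply Summable.of_norm_bounded hsum
    intro n
    rw [norm_pow]
    calc (‖w n‖)^j ≤ (‖w n‖)^1 :=
          pow_le_pow_of_le_one (norm_nonneg _) (hw n) hj
      _ = ‖w n‖ := pow_one _
  have hre_summ : ∀ j : ℕ, 1 ≤ j → Summable (fun n => ((w n)^j).re) := by
    intro j hj
    exact (hpow_summ j hj).mapL Complex.reCLM
  set Tn : ℕ → ℝ := fun n => ∑ j ∈ Finset.Icc 1 J, lam j * ((w n)^j).re with hTn
  have hTn_summ : Summable Tn := by
    rw [hTn]
    apply summable_sum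
    intro j hj
    exact ((hre_summ j (Finset.mem_Icc.mp hj).1).mul_left (lam j))
  -- upper bound for the tsum
  have hswap : ∑' n, Tn n = ∑ j ∈ Finset.Icc 1 J, lam j * (∑' n, ((w n)^j).re) := by
    rw [hTn]
    rw [Summable.tsum_finsetSum (fun j hj => ((hre_summ j (Finset.mem_Icc.mp hj).1).mul_left (lam j)))]
    exact Finset.sum_congr rfl fun j _ => tsum_mul_left
  have hsum_lam : ∑ j ∈ Finset.Icc 1 J, lam j = (J:ℝ)*P/4 + D u / 2 := by
    have h1 : ∀ j ∈ Finset.Icc 1 J, lam j = (P-(j:ℝ))/2 + ((P-(j:ℝ)) * ((u^j).re))/2 := by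
      intro j _
      rw [hlam]; ring
    rw [Finset.sum_congr rfl h1, Finset.sum_add_distrib, ← Finset.sum_div, ← Finset.sum_div,
      hPsum, hD]
    ring
  have hupper : ∑' n, Tn n ≤ δ * ((J:ℝ)*P/4 + D u / 2) := by
    rw [hswap]
    calc ∑ j ∈ Finset.Icc 1 J, lam j * (∑' n, ((w n)^j).re)
        ≤ ∑ j ∈ Finset.Icc 1 J, lam j * δ := by
          apply Finset.sum_le_sum
          intro j hj
          have hj' := Finset.mem_Icc.mp hj
          have hlt := hcon j hj'.1 hj'.2
          have : (∑' n, ((w n)^j).re) = (∑' n, (w n)^j).re :=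
            (Complex.re_tsum (hpow_summ j hj'.1)).symm
          rw [this]
          exact mul_le_mul_of_nonneg_left (le_of_lt hlt) (hlam_nonneg j hj)
      _ = (∑ j ∈ Finset.Icc 1 J, lam j) * δ := by rw [Finset.sum_mul]
      _ = δ * ((J:ℝ)*P/4 + D u / 2) := by rw [hsum_lam]; ring
  -- lower bound: the term n = m
  have hcu : (starRingEnd ℂ) u * u = 1 := by
    rw [mul_comm, Complex.mul_conj]
    rw [Complex.normSq_eq_norm_sq, habs_u]
    norm_num
  have hTm_lb : D u / 2 - P/8 + (J:ℝ)*P/8 ≤ Tn m := by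
    have h0 : Tn m = D u / 2 + D (u*u) / 4 + D 1 / 4 := by
      rw [hTn]
      simp only
      have := hsymm (w m)
      rw [← hu] at this
      rw [this, hcu]
    have h1 : -(P/2) ≤ D (u*u) := by
      apply hDhalf
      rw [norm_mul, habs_u, one_mul]
    rw [h0, hDone]
    linarith
  -- lower bound: other terms
  have hTn_lb : ∀ n, -(((J:ℝ)+2) * ‖w n‖) ≤ Tn n := by
    intro n
    have h0 : Tn n = D (w n) / 2 + D (u * w n) / 4 + D ((starRingEnd ℂ) u * w n) / 4 := by
      rw [hTn]; exact hsymm (w n)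
    have e2 : ‖u * w n‖ = ‖w n‖ := by
      rw [norm_mul, habs_u, one_mul]
    have e3 : ‖(starRingEnd ℂ) u * w n‖ = ‖w n‖ := by
      rw [norm_mul, Complex.norm_conj, habs_u, one_mul]
    have b1 := hDge (w n) (hw n)
    have b2 := hDge (u * w n) (by rw [e2]; exact hw n)
    have b3 := hDge ((starRingEnd ℂ) u * w n) (by rw [e3]; exact hw n)
    rw [e2] at b2
    rw [e3] at b3
    rw [h0]
    linarith
  -- split the tsum at m
  have htsplit := Summable.tsum_eq_add_tsum_ite hTn_summ m
  have habs_split := Summable.tsum_eq_add_tsum_ite hsum m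
  have hMrest : ∑' n, (if n = m then 0 else ‖w n‖) = M - 1 := by
    rw [hM, habs_split, hm]
    ring
  have hs1 : Summable (fun n => if n = m then 0 else Tn n) := by
    have h := hTn_summ.update m 0
    have : (fun n => if n = m then 0 else Tn n) = Function.update Tn m 0 := by
      funext n
      simp [Function.update_apply]
    rw [this]
    exact h
  have hs2 : Summable (fun n => if n = m then 0 else ‖w n‖) := by
    have h := hsum.update m 0
    have : (fun n => if n = m then 0 else ‖w n‖) =
        Function.update (fun n => ‖w n‖) m 0 := by
      funext n
      simp [Function.update_apply]
    rw [this]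
    exact h
  have hlow2 : -(((J:ℝ)+2) * (M - 1)) ≤ ∑' n, (if n = m then 0 else Tn n) := by
    have hle : ∀ n, (-(((J:ℝ)+2)) * (if n = m then 0 else ‖w n‖))
        ≤ (if n = m then 0 else Tn n) := by
      intro n
      by_cases hnm : n = m
      · simp [hnm]
      · simp only [if_neg hnm]
        have := hTn_lb n
        linarith
    have := Summable.tsum_le_tsum hle (hs2.mul_left _) hs1
    rw [tsum_mul_left, hMrest] at this
    linarith
  -- combine
  have hfinal : D u / 2 - P/8 + (J:ℝ)*P/8 - (((J:ℝ)+2) * (M - 1))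
      ≤ δ * ((J:ℝ)*P/4 + D u / 2) := by
    calc D u / 2 - P/8 + (J:ℝ)*P/8 - (((J:ℝ)+2) * (M - 1))
        ≤ Tn m + ∑' n, (if n = m then 0 else Tn n) := by
          have := add_le_add hTm_lb hlow2
          linarith
      _ = ∑' n, Tn n := htsplit.symm
      _ ≤ δ * ((J:ℝ)*P/4 + D u / 2) := hupper
  have hDu : -(P/2) ≤ D u := hDhalf u (le_of_eq habs_u)
  have hP0 : (0:ℝ) ≤ P := by rw [hP]; positivity
  obtain ⟨Pr, hPr⟩ : ∃ x : ℝ, P = x := ⟨P, rfl⟩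
  obtain ⟨Mr, hMr⟩ : ∃ x : ℝ, M = x := ⟨M, rfl⟩
  obtain ⟨Du, hDu'⟩ : ∃ x : ℝ, D u = x := ⟨D u, rfl⟩
  rw [hPr, hMr] at harith
  rw [hPr] at hP0
  rw [hPr, hDu', hMr] at hfinal
  rw [hPr, hDu'] at hDu
  have e1 : (1-δ) * (-(Pr/2)) ≤ (1-δ) * Du :=
    mul_le_mul_of_nonneg_left hDu (by linarith)
  have e3 : (0:ℝ) ≤ δ * Pr := mul_nonneg hδ0 hP0
  have e2 : (1-2*δ)*((J:ℝ)*Pr) ≤ 3*Pr + 8*((J:ℝ)+2)*(Mr-1) := by linarith [hfinal, e1, e3]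
  linarith [e2, harith]



/-- **Power sum lower bound** (Corollary 2.12).  Here `z n` denotes the term `z_{n+1}` of the
sequence `(z_n)_{n ≥ 1}`; in particular `z 0` is the first term `z₁`.  If `z₁ ≠ 0` and
`∑ |z_n|` converges, then with `𝓜 = (∑ |z_n|)/|z₁|` there is an integer `1 ≤ j ≤ (8+ε)𝓜` with
`Re (∑ z_n^j) ≥ (ε/(32+4ε)) |z₁|^j`. -/
theorem power_sum_lower_bound (ε : ℝ) (hε : 0 < ε) (z : ℕ → ℂ) (hz1 : z 0 ≠ 0)
    (hsum : Summable fun n => ‖z n‖) :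
    ∃ j : ℕ, 1 ≤ j ∧
      (j : ℝ) ≤ (8 + ε) * ((∑' n : ℕ, ‖z n‖) / ‖z 0‖) ∧
      ε / (32 + 4 * ε) * ‖z 0‖ ^ j ≤ (∑' n : ℕ, z n ^ j).re := by
  -- a maximal-modulus index
  obtain ⟨m, hmax⟩ : ∃ m : ℕ, ∀ n : ℕ, ‖z n‖ ≤ ‖z m‖ := by
    have h0 : 0 < ‖z 0‖ := by
      simpa using norm_pos_iff.mpr hz1
    have htend : Filter.Tendsto (fun n => ‖z n‖) Filter.atTop (nhds 0) :=
      hsum.tendsto_atTop_zero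
    obtain ⟨N, hN⟩ : ∃ N : ℕ, ∀ n ≥ N, ‖z n‖ < ‖z 0‖ := by
      have := htend.eventually (eventually_lt_nhds h0)
      simpa [Filter.eventually_atTop] using this
    obtain ⟨m, hm_mem, hm_max⟩ :=
      Finset.exists_max_image (Finset.range (N+1)) (fun n => ‖z n‖)
        ⟨0, Finset.mem_range.mpr (Nat.succ_pos N)⟩
    refine ⟨m, fun n => ?_⟩
    by_cases hn : n < N + 1
    · exact hm_max n (Finset.mem_range.mpr hn)
    · have h1 : ‖z n‖ < ‖z 0‖ := hN n (by omega)
      have h2 : ‖z 0‖ ≤ ‖z m‖ :=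
        hm_max 0 (Finset.mem_range.mpr (Nat.succ_pos N))
      linarith
  set R : ℝ := ‖z m‖ with hR
  have hR0 : 0 < R := by
    have h0 : 0 < ‖z 0‖ := norm_pos_iff.mpr hz1
    exact lt_of_lt_of_le h0 (hmax 0)
  set w : ℕ → ℂ := fun n => z n / (R:ℂ) with hw_def
  have habs_w : ∀ n, ‖w n‖ = ‖z n‖ / R := by
    intro n
    rw [hw_def]
    simp [norm_div, Complex.norm_real, Real.norm_eq_abs, abs_of_pos hR0]
  have hw1 : ∀ n, ‖w n‖ ≤ 1 := by
    intro n
    rw [habs_w]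
    rw [div_le_one hR0]
    exact hmax n
  have hwm : ‖w m‖ = 1 := by
    rw [habs_w, hR, div_self (ne_of_gt hR0)]
  have hsumw : Summable (fun n => ‖w n‖) := by
    have : (fun n => ‖w n‖) = fun n => ‖z n‖ / R := by
      funext n; exact habs_w n
    rw [this]
    exact hsum.div_const R
  have hMw : (∑' n, ‖w n‖) = (∑' n, ‖z n‖) / R := by
    have : (fun n => ‖w n‖) = fun n => ‖z n‖ / R := by
      funext n; exact habs_w n
    rw [this, tsum_div_const]
  set M' : ℝ := (∑' n, ‖z n‖) / R with hM'
  have hM'1 : 1 ≤ M' := by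
    rw [← hMw]
    have := Summable.le_tsum hsumw m (fun j _ => norm_nonneg _)
    rw [hwm] at this
    exact this
  set J : ℕ := ⌊(8+ε) * M'⌋₊ with hJ
  have hBM8 : (8:ℝ) ≤ (8+ε) * M' := by nlinarith
  have hJ8 : 8 ≤ J := Nat.le_floor (by exact_mod_cast hBM8)
  have hJle : (J:ℝ) ≤ (8+ε) * M' := Nat.floor_le (by nlinarith)
  have hJgt : (8+ε) * M' < (J:ℝ) + 1 := Nat.lt_floor_add_one _
  set δ : ℝ := ε / (32 + 4*ε) with hδ
  have hδ0 : 0 ≤ δ := by rw [hδ]; positivity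
  have hδ1 : 2*δ ≤ 1 := by
    have hc : (0:ℝ) < 32 + 4*ε := by linarith
    have h2 : 2*δ = (2*ε)/(32+4*ε) := by rw [hδ]; ring
    rw [h2, div_le_one hc]
    linarith
  have harith : 3*((J:ℝ)+1) + 8*((J:ℝ)+2)*((∑' n, ‖w n‖) - 1)
      < (J:ℝ)*((J:ℝ)+1)*(1 - 2*δ) := by
    rw [hMw]
    have h12δ : 1 - 2*δ = (16+ε)/(16+2*ε) := by
      rw [hδ]
      field_simp
      ring
    rw [h12δ]
    set X : ℝ := (J:ℝ) with hX
    have hXpos : (0:ℝ) < X + 1 := by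
      have : (0:ℝ) ≤ X := by rw [hX]; positivity
      linarith
    have hc2 : (0:ℝ) < 16 + 2*ε := by linarith
    rw [← mul_div_assoc, lt_div_iff₀ hc2]
    -- key lower bound for X*(16+ε)
    have hQ : 3*(16+2*ε) + 8*(16+2*ε)*(M'-1) + (64+9*ε+(8*ε+ε^2)*M') < X*(16+ε) := by
      have hp := mul_lt_mul_of_pos_right hJgt (show (0:ℝ) < 16+ε by linarith)
      nlinarith [hp]
    have hA : (8:ℝ)*M' < X + 1 := by
      have h1 : (8:ℝ)*M' ≤ (8+ε)*M' := by nlinarith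
      linarith
    have haux : 8*(16+2*ε)*(M'-1) ≤ (X+1)*(64+9*ε+(8*ε+ε^2)*M') := by
      nlinarith [hA, hM'1, hε.le, mul_nonneg (mul_nonneg hε.le (by linarith : (0:ℝ) ≤ M')) (by linarith : (0:ℝ) ≤ M'-1), mul_nonneg hε.le (by linarith : (0:ℝ) ≤ M'-1), mul_pos (by linarith : (0:ℝ) < X+1-8*M') (by nlinarith [hε.le, hM'1] : (0:ℝ) < 64+9*ε+(8*ε+ε^2)*M')]
    have hstep := mul_lt_mul_of_pos_left hQ hXpos
    nlinarith [hstep, haux]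
  obtain ⟨j, hj1, hjJ, hjre⟩ := main_normalized w hw1 m hwm hsumw J δ hδ0 hδ1 harith
  refine ⟨j, hj1, ?_, ?_⟩
  · calc (j:ℝ) ≤ (J:ℝ) := by exact_mod_cast hjJ
      _ ≤ (8+ε) * M' := hJle
      _ ≤ (8+ε) * ((∑' n : ℕ, ‖z n‖) / ‖z 0‖) := by
        apply mul_le_mul_of_nonneg_left _ (by linarith)
        rw [hM']
        have hz0 : 0 < ‖z 0‖ := norm_pos_iff.mpr hz1
        have hT : 0 ≤ ∑' n, ‖z n‖ :=
          tsum_nonneg fun n => norm_nonneg _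
        exact div_le_div_of_nonneg_left hT hz0 (hmax 0)
  · have hz_eq : ∀ n, z n = (R:ℂ) * w n := by
      intro n
      rw [hw_def]
      have : (R:ℂ) ≠ 0 := by
        simp only [ne_eq, Complex.ofReal_eq_zero]
        exact ne_of_gt hR0
      field_simp
    have htz : (∑' n, z n ^ j) = (R:ℂ)^j * ∑' n, (w n)^j := by
      have h1 : ∀ n, z n ^ j = (R:ℂ)^j * (w n)^j := by
        intro n; rw [hz_eq n, mul_pow]
      simp_rw [h1]
      exact tsum_mul_left
    have hre : (∑' n, z n ^ j).re = R^j * (∑' n, (w n)^j).re := by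
      rw [htz, ← Complex.ofReal_pow, Complex.re_ofReal_mul]
    rw [hre]
    have hz0 : 0 < ‖z 0‖ := norm_pos_iff.mpr hz1
    calc δ * ‖z 0‖ ^ j ≤ δ * R^j := by
          apply mul_le_mul_of_nonneg_left _ hδ0
          exact pow_le_pow_left₀ (norm_nonneg _) (hmax 0) j
      _ ≤ R^j * (∑' n, (w n)^j).re := by
          rw [mul_comm]
          exact mul_le_mul_of_nonneg_left hjre (pow_nonneg hR0.le j)
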